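/- Let X be a spectral space with specialization order ≤, and let 𝒳(X) be the spectral space of nonempty inverse-closed subsets of X with the Zariski topology generated by 𝒰(Ω) = {Y : Y ⊆ Ω} for Ω quasi-compact open. The embedding φ : X → 𝒳(X), x ↦ {x}^gen, is surjective (hence a homeomorphism) if and only if (X, ≤) is linearly ordered. -/

import Mathlib

universe u

/-- A topological space is *spectral* if it is homeomorphic to the prime spectrum of some
commutative ring, endowed with the Zariski topology. -/
def IsSpectralSpace (X : Type u) [TopologicalSpace X] : Prop :=
  ∃ (R : Type u) (_ : CommRing R), Nonempty (X ≃ₜ PrimeSpectrum R)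

/-- The inverse topology: the quasi-compact open subsets form a basis of closed sets. -/
def invTopology (X : Type u) [TopologicalSpace X] : TopologicalSpace X :=
  TopologicalSpace.generateFrom {s : Set X | IsOpen sᶜ ∧ IsCompact sᶜ}

/-- `𝒳(X)`: the nonempty inverse-closed subsets of `X`. -/
def InvClosedSets (X : Type u) [TopologicalSpace X] : Type u :=
  {Y : Set X // Y.Nonempty ∧ @IsClosed X (invTopology X) Y}

/-- The Zariski topology on `𝒳(X)`, generated by the basic open sets
`𝒰(Ω) = {Y : Y ⊆ Ω}` for `Ω` quasi-compact open in `X`. -/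
instance (X : Type u) [TopologicalSpace X] : TopologicalSpace (InvClosedSets X) :=
  TopologicalSpace.generateFrom
    {s : Set (InvClosedSets X) |
      ∃ Ω : Set X, IsOpen Ω ∧ IsCompact Ω ∧ s = {Y : InvClosedSets X | Y.1 ⊆ Ω}}

open TopologicalSpace Topology

section Aux

variable {α : Type*} [TopologicalSpace α]

/-- Sets open in the inverse topology are stable under specialization. -/
lemma genOpen_stable {O : Set α}
    (hO : TopologicalSpace.GenerateOpen {s : Set α | IsOpen sᶜ ∧ IsCompact sᶜ} O) :
    ∀ z ∈ O, ∀ x, x ∈ closure ({z} : Set α) → x ∈ O := by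
  induction hO with
  | basic s hs =>
    intro z hz x hx
    by_contra hxs
    rcases (mem_closure_iff.mp hx) sᶜ hs.1 hxs with ⟨w, hw1, hw2⟩
    simp only [Set.mem_singleton_iff] at hw2
    exact hw1 (hw2 ▸ hz)
  | univ => intro z _ x _; trivial
  | inter s t _ _ ihs iht =>
    intro z hz x hx
    exact ⟨ihs z hz.1 x hx, iht z hz.2 x hx⟩
  | sUnion S _ ih =>
    intro z hz x hx
    rcases hz with ⟨s, hsS, hzs⟩
    exact ⟨s, hsS, ih s hsS z hzs x hx⟩

/-- Sets closed in the inverse topology are stable under generization. -/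
lemma invClosed_stable {Y : Set α} (hY : @IsClosed α (invTopology α) Y)
    {x z : α} (hx : x ∈ Y) (hz : x ∈ closure ({z} : Set α)) : z ∈ Y := by
  by_contra hzY
  have hO : TopologicalSpace.GenerateOpen {s : Set α | IsOpen sᶜ ∧ IsCompact sᶜ} Yᶜ :=
    hY.isOpen_compl
  exact (genOpen_stable hO z hzY x hz) hx

/-- A point of a set open in the inverse topology can be separated from its complement
by a quasi-compact open set. -/
lemma genOpen_escape {O : Set α}
    (hO : TopologicalSpace.GenerateOpen {s : Set α | IsOpen sᶜ ∧ IsCompact sᶜ} O) :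
    ∀ x ∈ O, ∃ Ω : Set α, IsOpen Ω ∧ IsCompact Ω ∧ x ∉ Ω ∧ Oᶜ ⊆ Ω := by
  induction hO with
  | basic s hs =>
    intro x hx
    exact ⟨sᶜ, hs.1, hs.2, fun h => h hx, fun y hy => hy⟩
  | univ =>
    intro x _
    exact ⟨∅, isOpen_empty, isCompact_empty, fun h => h, by simp⟩
  | inter s t _ _ ihs iht =>
    intro x hx
    obtain ⟨Ω1, h1o, h1c, h1x, h1s⟩ := ihs x hx.1
    obtain ⟨Ω2, h2o, h2c, h2x, h2s⟩ := iht x hx.2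
    refine ⟨Ω1 ∪ Ω2, h1o.union h2o, h1c.union h2c, fun h => h.elim h1x h2x, ?_⟩
    rw [Set.compl_inter]
    exact Set.union_subset_union h1s h2s
  | sUnion S _ ih =>
    intro x hx
    rcases hx with ⟨s, hsS, hxs⟩
    obtain ⟨Ω, ho, hc, hxΩ, hsΩ⟩ := ih s hsS x hxs
    exact ⟨Ω, ho, hc, hxΩ, fun y hy => hsΩ (fun h => hy ⟨s, hsS, h⟩)⟩

/-- A homeomorphism is continuous for the inverse topologies. -/
lemma inv_continuous {β : Type*} [TopologicalSpace β] (e : α ≃ₜ β) :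
    Continuous[invTopology α, invTopology β] e := by
  rw [show invTopology β = TopologicalSpace.generateFrom {s : Set β | IsOpen sᶜ ∧ IsCompact sᶜ}
    from rfl, continuous_generateFrom_iff]
  intro s hs
  have h1 : IsOpen (e ⁻¹' s)ᶜ := by
    rw [← Set.preimage_compl]; exact hs.1.preimage e.continuous
  have h2 : IsCompact (e ⁻¹' s)ᶜ := by
    rw [← Set.preimage_compl, e.isCompact_preimage]; exact hs.2
  exact TopologicalSpace.GenerateOpen.basic _ ⟨h1, h2⟩

lemma closure_transfer {β : Type*} [TopologicalSpace β] (e : α ≃ₜ β) (x z : α) :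
    x ∈ closure ({z} : Set α) ↔ e x ∈ closure ({e z} : Set β) := by
  rw [← Set.image_singleton, ← Homeomorph.image_closure]
  exact (e.injective.mem_set_image).symm

end Aux

section Spec

variable {R : Type*} [CommRing R]

open PrimeSpectrum

/-- The set of generizations of a point of a prime spectrum is inverse-closed. -/
lemma gen_invClosed (x : PrimeSpectrum R) :
    @IsClosed _ (invTopology (PrimeSpectrum R)) {z : PrimeSpectrum R | x ∈ closure {z}} := by
  refine @IsClosed.mk _ (invTopology (PrimeSpectrum R)) _ ?_
  have : {z : PrimeSpectrum R | x ∈ closure {z}}ᶜ =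
      ⋃ f ∈ {f : R | f ∉ x.asIdeal}, ((basicOpen f : Set (PrimeSpectrum R)))ᶜ := by
    ext z
    rw [Set.mem_compl_iff, Set.mem_setOf_eq, ← le_iff_mem_closure, ← asIdeal_le_asIdeal,
      SetLike.not_le_iff_exists]
    simp only [Set.mem_iUnion, Set.mem_compl_iff, SetLike.mem_coe, mem_basicOpen,
      Set.mem_setOf_eq, not_not]
    constructor
    · rintro ⟨f, hfz, hfx⟩; exact ⟨f, hfx, hfz⟩
    · rintro ⟨f, hfx, hfz⟩; exact ⟨f, hfz, hfx⟩
  rw [this]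
  refine @isOpen_biUnion _ _ (invTopology (PrimeSpectrum R)) _ _ ?_
  intro f _
  refine TopologicalSpace.GenerateOpen.basic _ ⟨?_, ?_⟩
  · rw [compl_compl]; exact (basicOpen f).isOpen
  · rw [compl_compl]; exact isCompact_basicOpen f

/-- A nonempty chain which is closed in the inverse topology has a top element. -/
lemma exists_top {Z : Set (PrimeSpectrum R)} (hne : Z.Nonempty)
    (hcl : @IsClosed _ (invTopology (PrimeSpectrum R)) Z)
    (hch : ∀ a ∈ Z, ∀ b ∈ Z, a ≤ b ∨ b ≤ a) :
    ∃ m ∈ Z, ∀ z ∈ Z, z ≤ m := by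
  classical
  haveI : Nonempty Z := hne.to_subtype
  set F : Z → Ideal R := fun z => z.1.asIdeal with hF
  have hdir : Directed (· ≤ ·) F := by
    intro a b
    rcases hch a.1 a.2 b.1 b.2 with h | h
    · exact ⟨b, (asIdeal_le_asIdeal _ _).mpr h, le_rfl⟩
    · exact ⟨a, le_rfl, (asIdeal_le_asIdeal _ _).mpr h⟩
  set P : Ideal R := ⨆ z : Z, F z with hP
  have memP : ∀ r : R, r ∈ P ↔ ∃ z : Z, r ∈ z.1.asIdeal := fun r =>
    Submodule.mem_iSup_of_directed F hdir
  have hPprime : P.IsPrime := by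
    constructor
    · intro h
      rcases (memP 1).mp (h ▸ Submodule.mem_top) with ⟨z, hz⟩
      exact z.1.isPrime.ne_top (Ideal.eq_top_of_isUnit_mem _ hz isUnit_one)
    · intro a b hab
      rcases (memP (a * b)).mp hab with ⟨z, hz⟩
      rcases z.1.isPrime.mem_or_mem hz with h | h
      · exact Or.inl ((memP a).mpr ⟨z, h⟩)
      · exact Or.inr ((memP b).mpr ⟨z, h⟩)
  set m : PrimeSpectrum R := ⟨P, hPprime⟩ with hm
  have hub : ∀ z ∈ Z, z ≤ m := by
    intro z hz
    exact (asIdeal_le_asIdeal _ _).mp (le_iSup F ⟨z, hz⟩)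
  refine ⟨m, ?_, hub⟩
  by_contra hmZ
  obtain ⟨Ω, hΩo, hΩc, hmΩ, hZΩ'⟩ := genOpen_escape (hcl.isOpen_compl) m hmZ
  have hZΩ : Z ⊆ Ω := by rwa [compl_compl] at hZΩ'
  obtain ⟨s, hsΩ⟩ := (isClosed_iff_zeroLocus Ωᶜ).mp hΩo.isClosed_compl
  have hsP : s ⊆ (P : Set R) := by
    have : m ∈ zeroLocus s := hsΩ ▸ hmΩ
    exact this
  have hcover : Ω ⊆ ⋃ f : s, ((basicOpen f.1 : Set (PrimeSpectrum R))) := by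
    intro z hz
    have hz' : z ∉ zeroLocus s := by
      intro h
      exact (hsΩ ▸ h : z ∈ Ωᶜ) hz
    rw [mem_zeroLocus] at hz'
    rcases Set.not_subset.mp hz' with ⟨f, hfs, hfz⟩
    exact Set.mem_iUnion.mpr ⟨⟨f, hfs⟩, (mem_basicOpen f z).mpr hfz⟩
  obtain ⟨t, ht⟩ := hΩc.elim_finite_subcover
    (fun f : s => ((basicOpen f.1 : Set (PrimeSpectrum R)))) (fun f => (basicOpen f.1).isOpen)
    hcover
  choose g hg using fun f : s => (memP f.1).mp (hsP f.2)
  set Fin : Finset (PrimeSpectrum R) := t.image (fun f => (g f).1) with hFin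
  have hFinZ : ∀ p ∈ Fin, p ∈ Z := by
    intro p hp
    rcases Finset.mem_image.mp hp with ⟨f, _, rfl⟩
    exact (g f).2
  have hFinne : Fin.Nonempty := by
    obtain ⟨z₀, hz₀⟩ := hne
    have := ht (hZΩ hz₀)
    rcases Set.mem_iUnion₂.mp this with ⟨f, hf, _⟩
    exact ⟨(g f).1, Finset.mem_image.mpr ⟨f, hf, rfl⟩⟩
  obtain ⟨m', hm'F, hm'max⟩ := ((Finset.exists_maximal hFinne).imp fun _ h =>
    ⟨h.1, fun _ hx hlt => lt_irrefl _ (lt_of_lt_of_le hlt (h.2 hx hlt.le))⟩ :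
      ∃ m' ∈ Fin, ∀ x ∈ Fin, ¬ m' < x)
  have hm'Z : m' ∈ Z := hFinZ m' hm'F
  have := ht (hZΩ hm'Z)
  rcases Set.mem_iUnion₂.mp this with ⟨f, hft, hfm'⟩
  have hgf : (g f).1 ∈ Fin := Finset.mem_image.mpr ⟨f, hft, rfl⟩
  have hle : (g f).1 ≤ m' := by
    rcases hch (g f).1 (g f).2 m' hm'Z with h | h
    · exact h
    · rcases eq_or_lt_of_le h with h' | h'
      · exact le_of_eq h'.symm
      · exact absurd h' (hm'max _ hgf)
  have : f.1 ∈ m'.asIdeal := (asIdeal_le_asIdeal _ _).mpr hle (hg f)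
  exact ((mem_basicOpen f.1 m').mp hfm') this

end Spec

/-- For a spectral space `X`, the embedding `φ : X → 𝒳(X)`, `x ↦ {x}^gen`, is surjective
(hence a homeomorphism) if and only if the specialization order of `X` (`x ≤ y` iff
`y ∈ Cl({x})`) is linear. -/
theorem gen_embedding_surjective_iff_linearOrder (X : Type u) [TopologicalSpace X]
    (hX : IsSpectralSpace X) (φ : X → InvClosedSets X)
    (hφ : ∀ x : X, (φ x).1 = {z : X | x ∈ closure {z}}) :
    Function.Surjective φ ↔ ∀ x y : X, y ∈ closure {x} ∨ x ∈ closure {y} := by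
  obtain ⟨R, _, ⟨e⟩⟩ := hX
  -- generization sets in X are inverse-closed
  have hgen_eq : ∀ x : X, {z : X | x ∈ closure {z}} =
      e ⁻¹' {z : PrimeSpectrum R | e x ∈ closure {z}} := by
    intro x
    ext z
    simp only [Set.mem_setOf_eq, Set.mem_preimage]
    exact closure_transfer e x z
  have hgen_closed : ∀ x : X, @IsClosed X (invTopology X) {z : X | x ∈ closure {z}} := by
    intro x
    rw [hgen_eq x]
    exact @IsClosed.preimage _ _ (invTopology X) (invTopology (PrimeSpectrum R)) _
      (inv_continuous e) _ (gen_invClosed (e x))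
  constructor
  · -- surjective → linear
    intro hsurj x y
    have hne : ({z : X | x ∈ closure {z}} ∪ {z : X | y ∈ closure {z}}).Nonempty :=
      ⟨x, Or.inl (subset_closure rfl)⟩
    have hcl : @IsClosed X (invTopology X)
        ({z : X | x ∈ closure {z}} ∪ {z : X | y ∈ closure {z}}) :=
      @IsClosed.union _ _ _ (invTopology X) (hgen_closed x) (hgen_closed y)
    obtain ⟨w, hw⟩ := hsurj ⟨_, hne, hcl⟩
    have hw' : {z : X | w ∈ closure {z}} =
        {z : X | x ∈ closure {z}} ∪ {z : X | y ∈ closure {z}} := by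
      rw [← hφ w, hw]
    have hxw : w ∈ closure ({x} : Set X) := by
      have : x ∈ {z : X | w ∈ closure {z}} ∨ True := Or.inr trivial
      have hx' : x ∈ {z : X | w ∈ closure {z}} ↔ _ := Iff.rfl
      have : x ∈ ({z : X | x ∈ closure {z}} ∪ {z : X | y ∈ closure {z}}) :=
        Or.inl (subset_closure rfl)
      rw [← hw'] at this
      exact this
    have hyw : w ∈ closure ({y} : Set X) := by
      have : y ∈ ({z : X | x ∈ closure {z}} ∪ {z : X | y ∈ closure {z}}) :=
        Or.inr (subset_closure rfl)
      rw [← hw'] at this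
      exact this
    have hwmem : w ∈ ({z : X | x ∈ closure {z}} ∪ {z : X | y ∈ closure {z}}) := by
      rw [← hw']
      exact subset_closure rfl
    rcases hwmem with h | h
    · -- x ∈ closure {w} and w ∈ closure {y}: x ∈ closure {y}
      right
      exact (isClosed_closure.closure_subset_iff.mpr
        (Set.singleton_subset_iff.mpr hyw)) (h : x ∈ closure {w})
    · left
      exact (isClosed_closure.closure_subset_iff.mpr
        (Set.singleton_subset_iff.mpr hxw)) (h : y ∈ closure {w})
  · -- linear → surjective
    intro hlin Y
    set Z : Set (PrimeSpectrum R) := e.symm ⁻¹' Y.1 with hZ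
    have hZne : Z.Nonempty := by
      obtain ⟨y₀, hy₀⟩ := Y.2.1
      exact ⟨e y₀, by simp [hZ, hy₀]⟩
    have hZcl : @IsClosed _ (invTopology (PrimeSpectrum R)) Z :=
      @IsClosed.preimage _ _ (invTopology (PrimeSpectrum R)) (invTopology X) _
        (inv_continuous e.symm) _ Y.2.2
    have hZch : ∀ a ∈ Z, ∀ b ∈ Z, a ≤ b ∨ b ≤ a := by
      intro a _ b _
      rcases hlin (e.symm a) (e.symm b) with h | h
      · exact Or.inl ((PrimeSpectrum.le_iff_mem_closure a b).mpr
          ((closure_transfer e.symm b a).mpr h))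
      · exact Or.inr ((PrimeSpectrum.le_iff_mem_closure b a).mpr
          ((closure_transfer e.symm a b).mpr h))
    obtain ⟨m, hmZ, hub⟩ := exists_top hZne hZcl hZch
    refine ⟨e.symm m, ?_⟩
    apply Subtype.ext
    rw [hφ]
    ext z
    simp only [Set.mem_setOf_eq]
    constructor
    · intro hz
      have hmz : m ∈ closure ({e z} : Set (PrimeSpectrum R)) := by
        have := (closure_transfer e (e.symm m) z).mp hz
        simpa using this
      have : e z ∈ Z := invClosed_stable hZcl hmZ hmz
      simpa [hZ] using this
    · intro hz
      have hez : e z ∈ Z := by simp [hZ, hz]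
      have h1 : m ∈ closure ({e z} : Set (PrimeSpectrum R)) :=
        (PrimeSpectrum.le_iff_mem_closure (e z) m).mp (hub _ hez)
      have := (closure_transfer e.symm m (e z)).mp h1
      simpa using this
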